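/- Let (X_k), (Y_k), (Z_k) be sequences of non-negative real numbers such that ∑_{k=0}^∞ Y_k < ∞ and X_{k+1} ≤ X_k + Y_k − Z_k for all k. Then the sequence (X_k) converges and ∑_{k=0}^∞ Z_k < ∞. -/
import Mathlib


open Filter

/-- Robbins–Siegmund-type deterministic lemma: if `X, Y, Z` are non-negative real
sequences with `∑ Y k < ∞` and `X (k+1) ≤ X k + Y k - Z k` for all `k`, then `X`
converges and `∑ Z k < ∞`. -/
theorem robbins_siegmund_deterministic
    (X Y Z : ℕ → ℝ)
    (hX : ∀ k, 0 ≤ X k) (hY : ∀ k, 0 ≤ Y k) (hZ : ∀ k, 0 ≤ Z k)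
    (hYsum : Summable Y)
    (hrec : ∀ k, X (k+1) ≤ X k + Y k - Z k) :
    (∃ l : ℝ, Tendsto X atTop (nhds l)) ∧ Summable Z := by
  -- tail sums of Y
  set T : ℕ → ℝ := fun k => ∑' n, Y (n + k) with hT
  have hTnn : ∀ k, 0 ≤ T k := fun k => tsum_nonneg fun n => hY _
  have hTrec : ∀ k, T k = Y k + T (k + 1) := by
    intro k
    have := Summable.tsum_eq_zero_add ((summable_nat_add_iff k).2 hYsum)
    simpa [hT, add_assoc, add_comm, add_left_comm] using this
  have hTtend : Tendsto T atTop (nhds 0) := by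
    simpa [hT] using tendsto_sum_nat_add Y
  -- W = X + T is antitone and nonneg
  set W : ℕ → ℝ := fun k => X k + T k with hW
  have hWanti : Antitone W := by
    apply antitone_nat_of_succ_le
    intro k
    have h1 := hrec k
    have h2 := hZ k
    have := hTrec k
    simp only [hW]
    nlinarith
  have hWnn : ∀ k, 0 ≤ W k := fun k => add_nonneg (hX k) (hTnn k)
  have hWconv : ∃ l, Tendsto W atTop (nhds l) := by
    refine ⟨⨅ k, W k, tendsto_atTop_ciInf hWanti ⟨0, ?_⟩⟩
    rintro x ⟨k, rfl⟩; exact hWnn k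
  obtain ⟨l, hl⟩ := hWconv
  constructor
  · refine ⟨l, ?_⟩
    have : Tendsto (fun k => W k - T k) atTop (nhds (l - 0)) := hl.sub hTtend
    simpa [hW] using this
  · -- partial sums of Z bounded
    have hbound : ∀ n, ∑ k ∈ Finset.range n, Z k ≤ X 0 + T 0 := by
      intro n
      induction n with
      | zero => simp [add_nonneg (hX 0) (hTnn 0)]
      | succ n ih =>
        have key : ∀ m, ∑ k ∈ Finset.range m, Z k ≤ X 0 + T 0 - W m := by
          intro m
          induction m with
          | zero => simp [hW]
          | succ m ihm =>
            rw [Finset.sum_range_succ]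
            have h1 := hrec m
            have h2 := hTrec m
            simp only [hW] at ihm ⊢
            nlinarith
        have := key (n + 1)
        have := hWnn (n + 1)
        linarith
    exact summable_of_sum_range_le hZ hbound
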